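/- Let A₁, …, Aₙ be positive (self-adjoint, nonnegative) bounded linear operators on a complex Hilbert space H. Then ‖∑_{k=1}^n A_k‖ ≤ ‖M‖, where M is the real n×n matrix with entries M_{jk} = ‖A_j A_k‖^{1/2}, ‖M‖ is its operator norm on Euclidean n-space, and ‖·‖ on operators is the operator norm. -/

import Mathlib

open scoped ENNReal NNReal InnerProductSpace

set_option maxHeartbeats 1000000
set_option synthInstance.maxHeartbeats 1000000

lemma my_spectralRadius_mul_comm {A : Type*} [NormedRing A] [NormedAlgebra ℂ A] (a b : A) :
    spectralRadius ℂ (a * b) = spectralRadius ℂ (b * a) := by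
  have key : ∀ c d : A, spectralRadius ℂ (c * d) ≤ spectralRadius ℂ (d * c) := by
    intro c d
    rw [spectralRadius, spectralRadius]
    apply iSup₂_le
    intro k hk
    by_cases h : k = 0
    · simp [h]
    · have hmem : k ∈ spectrum ℂ (d * c) := by
        have hswap := spectrum.nonzero_mul_comm (𝕜 := ℂ) c d
        have hk' : k ∈ spectrum ℂ (c * d) \ {0} := ⟨hk, by simp [h]⟩
        rw [hswap] at hk'
        exact hk'.1
      exact le_iSup₂ (f := fun k (_ : k ∈ spectrum ℂ (d * c)) => (‖k‖₊ : ℝ≥0∞)) k hmem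
  exact le_antisymm (key a b) (key b a)

/-- **Popovici–Sebestyén inequality.** For positive operators `A 1, …, A n` on a complex
Hilbert space, `‖∑ A k‖ ≤ ‖M‖` where `M j k = ‖A j * A k‖^{1/2}` and `‖M‖` is the
operator norm of the matrix on Euclidean `n`-space. -/
theorem norm_sum_le_norm_matrix {H : Type*} [NormedAddCommGroup H] [InnerProductSpace ℂ H]
    [CompleteSpace H] {n : ℕ} (A : Fin n → (H →L[ℂ] H)) (hA : ∀ k, (A k).IsPositive)
    (M : Matrix (Fin n) (Fin n) ℝ) (hM : ∀ j k, M j k = Real.sqrt ‖A j * A k‖) :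
    ‖∑ k, A k‖ ≤ ‖Matrix.toEuclideanCLM (𝕜 := ℝ) M‖ := by
  classical
  rcases subsingleton_or_nontrivial H with hH | hH
  · have hz : (∑ k, A k) = 0 := Subsingleton.elim _ _
    rw [hz, norm_zero]
    exact norm_nonneg _
  set T := Matrix.toEuclideanCLM (𝕜 := ℝ) M with hT
  set C := ‖T‖ with hCdef
  have hC : (0 : ℝ) ≤ C := norm_nonneg _
  set B : Fin n → (H →L[ℂ] H) := fun k => CFC.sqrt (A k) with hBdef
  have hAnn : ∀ k, (0 : H →L[ℂ] H) ≤ A k :=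
    fun k => (ContinuousLinearMap.nonneg_iff_isPositive _).2 (hA k)
  have hBnn : ∀ k, (0 : H →L[ℂ] H) ≤ B k := fun k => CFC.sqrt_nonneg _
  have hBsa : ∀ k, IsSelfAdjoint (B k) := fun k => IsSelfAdjoint.of_nonneg (hBnn k)
  have hB2 : ∀ k, B k * B k = A k := fun k => CFC.sqrt_mul_sqrt_self _ (hAnn k)
  -- key norm inequality
  have key : ∀ j k, ‖B j * B k‖ ≤ M j k := by
    intro j k
    rw [hM]
    have h1 : ‖B j * B k‖ * ‖B j * B k‖ = ‖B k * A j * B k‖ := by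
      rw [← CStarRing.norm_star_mul_self (x := B j * B k)]
      congr 1
      rw [star_mul, (hBsa j).star_eq, (hBsa k).star_eq, mul_assoc,
        ← mul_assoc (B j) (B j) (B k), hB2 j, ← mul_assoc]
    have ht : IsSelfAdjoint (B k * A j * B k) := by
      rw [IsSelfAdjoint, star_mul, star_mul, (hBsa k).star_eq, (hA j).isSelfAdjoint.star_eq, mul_assoc]
    have h2 : ‖B k * A j * B k‖ ≤ ‖A j * A k‖ := by
      have e1 : (‖B k * A j * B k‖₊ : ℝ≥0∞) = spectralRadius ℂ (B k * A j * B k) :=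
        ht.spectralRadius_eq_nnnorm.symm
      have e2 : spectralRadius ℂ (B k * A j * B k) = spectralRadius ℂ (A k * A j) := by
        rw [my_spectralRadius_mul_comm (B k * A j) (B k), ← mul_assoc, hB2 k]
      have e3 : spectralRadius ℂ (A k * A j) ≤ (‖A k * A j‖₊ : ℝ≥0∞) :=
        spectrum.spectralRadius_le_nnnorm (𝕜 := ℂ) _
      have e4 : ‖A k * A j‖ = ‖A j * A k‖ := by
        rw [← norm_star (A j * A k), star_mul, (hA j).isSelfAdjoint.star_eq, (hA k).isSelfAdjoint.star_eq]
      have := e1.trans_le (e2.le.trans e3)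
      rw [ENNReal.coe_le_coe] at this
      calc ‖B k * A j * B k‖ ≤ ‖A k * A j‖ := this
        _ = ‖A j * A k‖ := e4
    nlinarith [Real.sq_sqrt (norm_nonneg (A j * A k)), Real.sqrt_nonneg ‖A j * A k‖,
      norm_nonneg (B j * B k)]
  -- pointwise bound
  have main : ∀ x : H, ‖(∑ k, A k) x‖ ≤ C * ‖x‖ := by
    intro x
    set S := ∑ k, A k with hS
    by_cases hx : ‖S x‖ = 0
    · rw [hx]; positivity
    have hxpos : 0 < ‖S x‖ := lt_of_le_of_ne (norm_nonneg _) (Ne.symm hx)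
    have hSx : S x = ∑ k, A k x := by
      rw [hS]; exact ContinuousLinearMap.sum_apply _ _ _
    set w : Fin n → ℝ := fun k => ‖B k x‖ with hw
    set v : EuclideanSpace ℝ (Fin n) := (WithLp.equiv 2 _).symm w with hv
    have hvk : ∀ k, v k = w k := fun k => rfl
    have hwnn : ∀ k, 0 ≤ w k := fun k => norm_nonneg _
    -- each A k x in terms of B
    have hAx : ∀ k, A k x = B k (B k x) := by
      intro k
      rw [← hB2 k]; rfl
    have hadj : ∀ (u y : H) (l : Fin n), ⟪B l u, y⟫_ℂ = ⟪u, B l y⟫_ℂ := by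
      intro u y l
      conv_lhs => rw [← (hBsa l).adjoint_eq]
      exact ContinuousLinearMap.adjoint_inner_left _ _ _
    -- step 1
    have h1 : ‖S x‖ ^ 2 ≤ ∑ j, ∑ k, M j k * (w k * w j) := by
      have e0 : ‖S x‖ ^ 2 = RCLike.re (⟪S x, S x⟫_ℂ) := (inner_self_eq_norm_sq _).symm
      have e1 : (⟪S x, S x⟫_ℂ) = ∑ j, ∑ k, ⟪A k x, A j x⟫_ℂ := by
        rw [hSx, inner_sum]
        exact Finset.sum_congr rfl fun j _ => sum_inner _ _ _
      rw [e0, e1, map_sum]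
      apply Finset.sum_le_sum
      intro j _
      rw [map_sum]
      apply Finset.sum_le_sum
      intro k _
      have e2 : ⟪A k x, A j x⟫_ℂ = ⟪(B j * B k) (B k x), B j x⟫_ℂ := by
        rw [hAx j, hAx k, show (B j * B k) (B k x) = B j (B k (B k x)) from rfl]
        exact (hadj (B k (B k x)) (B j x) j).symm
      calc RCLike.re (⟪A k x, A j x⟫_ℂ) ≤ ‖(⟪A k x, A j x⟫_ℂ)‖ :=
            le_trans (le_abs_self _) (RCLike.abs_re_le_norm _)
        _ = ‖(⟪(B j * B k) (B k x), B j x⟫_ℂ)‖ := by rw [e2]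
        _ ≤ ‖(B j * B k) (B k x)‖ * ‖B j x‖ := norm_inner_le_norm _ _
        _ ≤ (‖B j * B k‖ * ‖B k x‖) * ‖B j x‖ := by
            apply mul_le_mul_of_nonneg_right ((B j * B k).le_opNorm _) (norm_nonneg _)
        _ ≤ (M j k * w k) * w j := by
            apply mul_le_mul_of_nonneg_right _ (hwnn j)
            exact mul_le_mul_of_nonneg_right (key j k) (hwnn k)
        _ = M j k * (w k * w j) := by ring
    -- step 2
    have h2 : ∑ j, ∑ k, M j k * (w k * w j) ≤ C * ‖v‖ ^ 2 := by
      have hTv : T v = (WithLp.equiv 2 _).symm (M.mulVec w) :=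
        Matrix.toEuclideanCLM_toLp M w
      have e3 : (⟪T v, v⟫_ℝ) = ∑ j, ∑ k, M j k * (w k * w j) := by
        rw [hTv, PiLp.inner_apply]
        apply Finset.sum_congr rfl
        intro j _
        simp only [RCLike.inner_apply, conj_trivial]
        rw [mul_comm]
        show (M.mulVec w j) * w j = _
        rw [Matrix.mulVec, dotProduct, Finset.sum_mul]
        exact Finset.sum_congr rfl fun k _ => by ring
      calc ∑ j, ∑ k, M j k * (w k * w j) = ⟪T v, v⟫_ℝ := e3.symm
        _ ≤ ‖T v‖ * ‖v‖ := real_inner_le_norm _ _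
        _ ≤ (C * ‖v‖) * ‖v‖ :=
            mul_le_mul_of_nonneg_right (T.le_opNorm v) (norm_nonneg _)
        _ = C * ‖v‖ ^ 2 := by ring
    -- step 3
    have h3 : ‖v‖ ^ 2 ≤ ‖S x‖ * ‖x‖ := by
      have e4 : ‖v‖ ^ 2 = ∑ k, w k * w k := by
        rw [← real_inner_self_eq_norm_sq, PiLp.inner_apply]
        exact Finset.sum_congr rfl fun k _ => by
          simp only [RCLike.inner_apply, conj_trivial]; rfl
      have e5 : ∀ k, w k * w k = RCLike.re (⟪A k x, x⟫_ℂ) := by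
        intro k
        have : (⟪A k x, x⟫_ℂ) = ⟪B k x, B k x⟫_ℂ := by
          rw [hAx k]
          exact hadj (B k x) x k
        rw [this, inner_self_eq_norm_sq]
        rw [hw]; ring
      have e6 : ∑ k, w k * w k = RCLike.re (⟪S x, x⟫_ℂ) := by
        rw [hSx, sum_inner, map_sum]
        exact Finset.sum_congr rfl fun k _ => e5 k
      rw [e4, e6]
      calc RCLike.re (⟪S x, x⟫_ℂ) ≤ ‖(⟪S x, x⟫_ℂ)‖ :=
            le_trans (le_abs_self _) (RCLike.abs_re_le_norm _)
        _ ≤ ‖S x‖ * ‖x‖ := norm_inner_le_norm _ _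
    have hfin : ‖S x‖ ^ 2 ≤ C * (‖S x‖ * ‖x‖) := by
      calc ‖S x‖ ^ 2 ≤ ∑ j, ∑ k, M j k * (w k * w j) := h1
        _ ≤ C * ‖v‖ ^ 2 := h2
        _ ≤ C * (‖S x‖ * ‖x‖) := mul_le_mul_of_nonneg_left h3 hC
    nlinarith [hfin, hxpos]
  exact ContinuousLinearMap.opNorm_le_bound _ hC main
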